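/- Decay estimate toward extinction: assume r ≤ m and let c = min{cSS, cSI, cIS, cII}. If (S, I) is a solution of the reduced system on [0,∞) with S(0) ≥ 0 and I(0) ≥ 0, then the total population W(t) = S(t) + I(t) satisfies 0 ≤ W(t) ≤ W(0)/(1 + W(0)·c·t) for all t ≥ 0. -/

import Mathlib

open Filter Topology

/-- `(S, I)` is a solution of the reduced system on `[0, ∞)`. -/
def IsSol (r m β γ μ cSS cSI cIS cII a : ℝ) (S I : ℝ → ℝ) : Prop :=
  ∀ t : ℝ, 0 ≤ t →
    HasDerivAt S (r * S t + a * r * I t - m * S t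
      - (cSS * S t + cSI * I t) * S t - β * S t * I t + γ * I t) t ∧
    HasDerivAt I (-(m * I t) - (cIS * S t + cII * I t) * I t
      + β * S t * I t - γ * I t - μ * I t) t

/-- `(s, i)` is an equilibrium point of the reduced system. -/
def IsEquilibrium (r m β γ μ cSS cSI cIS cII a : ℝ) (s i : ℝ) : Prop :=
  r * s + a * r * i - m * s - (cSS * s + cSI * i) * s - β * s * i + γ * i = 0 ∧
  -(m * i) - (cIS * s + cII * i) * i + β * s * i - γ * i - μ * i = 0

/-- All parameters are positive and `a ∈ (0, 1)`. -/
def ParamsPos (r m β γ μ cSS cSI cIS cII a : ℝ) : Prop :=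
  0 < r ∧ 0 < m ∧ 0 < β ∧ 0 < γ ∧ 0 < μ ∧
    0 < cSS ∧ 0 < cSI ∧ 0 < cIS ∧ 0 < cII ∧ 0 < a ∧ a < 1

/-- Gronwall-type lemma: if `f' ≤ g * f` on `[0, ∞)` and `f 0 ≤ 0`, then `f ≤ 0` there. -/
lemma gronwall_nonpos (f f' g : ℝ → ℝ) (hg : Continuous g)
    (hf : ∀ t, 0 ≤ t → HasDerivAt f (f' t) t)
    (hle : ∀ t, 0 ≤ t → f' t ≤ g t * f t)
    (h0 : f 0 ≤ 0) : ∀ t, 0 ≤ t → f t ≤ 0 := by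
  set G : ℝ → ℝ := fun x => ∫ s in (0:ℝ)..x, g s with hGdef
  have hG : ∀ t : ℝ, HasDerivAt G (g t) t := fun t =>
    intervalIntegral.integral_hasDerivAt_right (hg.intervalIntegrable _ _)
      hg.stronglyMeasurable.stronglyMeasurableAtFilter hg.continuousAt
  set F : ℝ → ℝ := fun x => f x * Real.exp (-(G x)) with hFdef
  have hF : ∀ t, 0 ≤ t →
      HasDerivAt F ((f' t - g t * f t) * Real.exp (-(G t))) t := by
    intro t ht
    have h1 : HasDerivAt (fun x => Real.exp (-(G x)))
        (Real.exp (-(G t)) * -(g t)) t := ((hG t).neg).exp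
    have h2 : HasDerivAt F (f' t * Real.exp (-(G t)) + f t * (Real.exp (-(G t)) * -(g t))) t :=
      (hf t ht).mul h1
    convert h2 using 1
    ring
  have hanti : AntitoneOn F (Set.Ici (0:ℝ)) := by
    apply antitoneOn_of_deriv_nonpos (convex_Ici 0)
    · exact fun x hx => ((hF x hx).continuousAt).continuousWithinAt
    · rw [interior_Ici]
      exact fun x hx => ((hF x (le_of_lt hx)).differentiableAt).differentiableWithinAt
    · rw [interior_Ici]
      intro x hx
      rw [(hF x (le_of_lt hx)).deriv]
      have := hle x (le_of_lt hx)
      have he := (Real.exp_pos (-(G x))).le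
      nlinarith
  intro t ht
  have hFt : F t ≤ F 0 := hanti (Set.self_mem_Ici) ht ht
  have hG0 : G 0 = 0 := intervalIntegral.integral_same
  have hF0 : F 0 = f 0 := by simp [hFdef, hG0]
  have hFt0 : F t ≤ 0 := le_trans hFt (hF0 ▸ h0)
  have he := Real.exp_pos (-(G t))
  by_contra h
  push_neg at h
  have : 0 < F t := mul_pos h he
  linarith

/-- Decay estimate toward extinction when `r ≤ m`. -/
theorem extinction_decay_estimate
    (r m β γ μ cSS cSI cIS cII a : ℝ)
    (hp : ParamsPos r m β γ μ cSS cSI cIS cII a)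
    (hrm : r ≤ m)
    (S I : ℝ → ℝ) (hsol : IsSol r m β γ μ cSS cSI cIS cII a S I)
    (hS0 : 0 ≤ S 0) (hI0 : 0 ≤ I 0) :
    ∀ t : ℝ, 0 ≤ t →
      0 ≤ S t + I t ∧
      S t + I t ≤ (S 0 + I 0) /
        (1 + (S 0 + I 0) * min (min cSS cSI) (min cIS cII) * t) := by
  obtain ⟨hr, hm, hβ, hγ, hμ, hcSS, hcSI, hcIS, hcII, ha0, ha1⟩ := hp
  set c : ℝ := min (min cSS cSI) (min cIS cII) with hcdef
  have hc : 0 < c := lt_min (lt_min hcSS hcSI) (lt_min hcIS hcII)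
  have hcS : c ≤ cSS := le_trans (min_le_left _ _) (min_le_left _ _)
  have hcS2 : c ≤ cSI := le_trans (min_le_left _ _) (min_le_right _ _)
  have hcI : c ≤ cIS := le_trans (min_le_right _ _) (min_le_left _ _)
  have hcI2 : c ≤ cII := le_trans (min_le_right _ _) (min_le_right _ _)
  -- continuity of S and I at nonnegative times, extended via `max`
  have hScont : ∀ t : ℝ, 0 ≤ t → ContinuousAt S t := fun t ht => (hsol t ht).1.continuousAt
  have hIcont : ∀ t : ℝ, 0 ≤ t → ContinuousAt I t := fun t ht => (hsol t ht).2.continuousAt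
  have hmaxc : Continuous (fun x : ℝ => max x 0) := continuous_id.max continuous_const
  have hSm : Continuous (fun t : ℝ => S (max t 0)) := by
    rw [continuous_iff_continuousAt]
    intro x
    have : ContinuousAt (S ∘ fun t : ℝ => max t 0) x :=
      ContinuousAt.comp (g := S) (f := fun t : ℝ => max t 0) (x := x)
        (hScont _ (le_max_right x 0)) hmaxc.continuousAt
    exact this
  have hIm : Continuous (fun t : ℝ => I (max t 0)) := by
    rw [continuous_iff_continuousAt]
    intro x
    have : ContinuousAt (I ∘ fun t : ℝ => max t 0) x :=
      ContinuousAt.comp (g := I) (f := fun t : ℝ => max t 0) (x := x)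
        (hIcont _ (le_max_right x 0)) hmaxc.continuousAt
    exact this
  -- Step 1: I is nonnegative
  have hInn : ∀ t, 0 ≤ t → 0 ≤ I t := by
    intro t ht
    have key := gronwall_nonpos (fun t => -(I t))
      (fun t => -(-(m * I t) - (cIS * S t + cII * I t) * I t
        + β * S t * I t - γ * I t - μ * I t))
      (fun t => -m - (cIS * S (max t 0) + cII * I (max t 0)) + β * S (max t 0) - γ - μ)
      ((((continuous_const.sub ((continuous_const.mul hSm).add (continuous_const.mul hIm))).add
        (continuous_const.mul hSm)).sub continuous_const).sub continuous_const)
      (fun s hs => (hsol s hs).2.neg)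
      (fun s hs => by simp only [max_eq_left hs]; exact le_of_eq (by ring))
      (by simpa using hI0) t ht
    simpa using key
  -- Step 2: S is nonnegative
  have hSnn : ∀ t, 0 ≤ t → 0 ≤ S t := by
    intro t ht
    have key := gronwall_nonpos (fun t => -(S t))
      (fun t => -(r * S t + a * r * I t - m * S t
        - (cSS * S t + cSI * I t) * S t - β * S t * I t + γ * I t))
      (fun t => r - m - (cSS * S (max t 0) + cSI * I (max t 0)) - β * I (max t 0))
      ((continuous_const.sub ((continuous_const.mul hSm).add (continuous_const.mul hIm))).sub
        (continuous_const.mul hIm))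
      (fun s hs => (hsol s hs).1.neg)
      (fun s hs => by
        simp only [max_eq_left hs]
        have hI := hInn s hs
        nlinarith [mul_nonneg (mul_nonneg ha0.le hr.le) hI, mul_nonneg hγ.le hI])
      (by simpa using hS0) t ht
    simpa using key
  intro t ht
  have hSt := hSnn t ht
  have hIt := hInn t ht
  refine ⟨by linarith, ?_⟩
  set W0 : ℝ := S 0 + I 0 with hW0def
  have hW0 : 0 ≤ W0 := by simp [hW0def]; linarith
  have hD : ∀ s : ℝ, 0 ≤ s → (0:ℝ) < 1 + W0 * c * s := by
    intro s hs
    nlinarith [mul_nonneg (mul_nonneg hW0 hc.le) hs]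
  -- Step 3: the quantity W(t)(1 + W0 c t) - W0 stays nonpositive
  have key := gronwall_nonpos
    (fun s => (S s + I s) * (1 + W0 * c * s) - W0)
    (fun s => ((r * S s + a * r * I s - m * S s
        - (cSS * S s + cSI * I s) * S s - β * S s * I s + γ * I s)
      + (-(m * I s) - (cIS * S s + cII * I s) * I s
        + β * S s * I s - γ * I s - μ * I s)) * (1 + W0 * c * s)
      + (S s + I s) * (W0 * c))
    (fun s => -(c * (S (max s 0) + I (max s 0))))
    ((continuous_const.mul (hSm.add hIm)).neg)
    (fun s hs => by
      have hlin : HasDerivAt (fun x : ℝ => 1 + W0 * c * x) (W0 * c) s := by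
        simpa using ((hasDerivAt_id s).const_mul (W0 * c)).const_add 1
      exact ((((hsol s hs).1.add (hsol s hs).2).mul hlin).sub_const W0)
    )
    (fun s hs => by
      simp only [max_eq_left hs]
      have hSs := hSnn s hs
      have hIs := hInn s hs
      have hDs := hD s hs
      -- the sum of the two vector fields is at most -c (S+I)^2
      have hsum : (r * S s + a * r * I s - m * S s
          - (cSS * S s + cSI * I s) * S s - β * S s * I s + γ * I s)
        + (-(m * I s) - (cIS * S s + cII * I s) * I s
          + β * S s * I s - γ * I s - μ * I s) ≤ -(c * (S s + I s)^2) := by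
        nlinarith [mul_nonneg (mul_nonneg (sub_nonneg.2 hcS) hSs) hSs,
          mul_nonneg (mul_nonneg (sub_nonneg.2 hcS2) hIs) hSs,
          mul_nonneg (mul_nonneg (sub_nonneg.2 hcI) hSs) hIs,
          mul_nonneg (mul_nonneg (sub_nonneg.2 hcI2) hIs) hIs,
          mul_nonneg (sub_nonneg.2 hrm) hSs,
          mul_nonneg (sub_nonneg.2 hrm) hIs,
          mul_nonneg (mul_nonneg (sub_nonneg.2 ha1.le) hr.le) hIs,
          mul_nonneg hμ.le hIs]
      have h1 : (r * S s + a * r * I s - m * S s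
          - (cSS * S s + cSI * I s) * S s - β * S s * I s + γ * I s
        + (-(m * I s) - (cIS * S s + cII * I s) * I s
          + β * S s * I s - γ * I s - μ * I s)) * (1 + W0 * c * s)
          ≤ -(c * (S s + I s)^2) * (1 + W0 * c * s) :=
        mul_le_mul_of_nonneg_right hsum hDs.le
      have h2 : -(c * (S s + I s)^2) * (1 + W0 * c * s) + (S s + I s) * (W0 * c)
          = -(c * (S s + I s)) * ((S s + I s) * (1 + W0 * c * s) - W0) := by ring
      linarith)
    (by norm_num [hW0def]) t ht
  have hDt := hD t ht
  rw [le_div_iff₀ hDt]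
  have key' : (S t + I t) * (1 + W0 * c * t) - W0 ≤ 0 := key
  linarith
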